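/- Let k ∈ ℕ and let Icc(L,R) with 0 ≤ L ≤ R < 2^k be a query range. Then the total number of active levels summed over all in-range points satisfies Σ_{u=L}^{R} N(u) ≤ 3·(R − L + 1). That is, on average each in-range object has O(1) active levels, which is the combinatorial core of the amortized O(m + log n) bound (Theorem 2) for the edge-selection algorithm that constructs the edges of a data object in the dedicated graph on the fly. -/
import Mathlib


/-- The level-`i`, index-`j` dyadic interval of the segment tree over `{0,...,2^k-1}`,
as a finset. -/
def dyadic (k i j : ℕ) : Finset ℕ := Finset.Ico (j * 2 ^ (k - i)) ((j + 1) * 2 ^ (k - i))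

/-- The unique level-`i` dyadic interval containing `u`, namely `D(i, ⌊u/2^(k-i)⌋)`. -/
def seg (k i u : ℕ) : Finset ℕ := dyadic k i (u / 2 ^ (k - i))

/-- The number of active levels for `u` with respect to the query range `Icc L R`:
levels `i < k` such that `s_i(u)` is not contained in `Icc L R` and
`s_i(u) ∩ Icc L R ≠ s_{i+1}(u) ∩ Icc L R`. -/
def numActive (k L R u : ℕ) : ℕ :=
  ((Finset.range k).filter (fun i =>
    ¬ seg k i u ⊆ Finset.Icc L R ∧
    seg k i u ∩ Finset.Icc L R ≠ seg k (i + 1) u ∩ Finset.Icc L R)).card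

lemma seg_succ (k i u : ℕ) : seg (k+1) (i+1) u = seg k i u := by
  simp [seg, dyadic, Nat.succ_sub_succ]

lemma seg_zero (k u : ℕ) : seg k 0 u = Finset.Ico (u / 2^k * 2^k) ((u / 2^k + 1) * 2^k) := by
  simp [seg, dyadic]

lemma lt_div_add_one_mul (u n : ℕ) (hn : 0 < n) : u < (u / n + 1) * n := by
  have h1 := Nat.div_add_mod u n
  have h2 := Nat.mod_lt u hn
  have : (u / n + 1) * n = n * (u / n) + n := by ring
  omega

lemma div_eq_block {n t u : ℕ} (h1 : n * t ≤ u) (h2 : u < n * t + n) : u / n = t := by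
  have hlo : t * n ≤ u := by rw [mul_comm]; exact h1
  have hhi : u < (t + 1) * n := by
    have h : (t + 1) * n = n * t + n := by ring
    rw [h]; exact h2
  exact Nat.div_eq_of_lt_le hlo hhi

lemma seg_subset_block (k i u : ℕ) :
    seg k i u ⊆ Finset.Ico (u / 2^k * 2^k) ((u / 2^k + 1) * 2^k) := by
  intro x hx
  simp only [seg, dyadic, Finset.mem_Ico] at hx ⊢
  set w := 2^(k-i) with hw
  have hwm : w * 2^(k-(k-i)) = 2^k := by rw [hw, ← pow_add]; congr 1; omega
  set m := 2^(k-(k-i)) with hm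
  have hm0 : 0 < m := pow_pos (by norm_num) _
  have hb : u / 2^k = u / w / m := by rw [← hwm, Nat.div_div_eq_div_mul]
  have h1 : u / w / m * m ≤ u / w := Nat.div_mul_le_self _ _
  have h2 : u / w + 1 ≤ (u / w / m + 1) * m := lt_div_add_one_mul _ _ hm0
  constructor
  · calc u / 2^k * 2^k = u / w / m * m * w := by rw [hb, ← hwm]; ring
      _ ≤ u / w * w := mul_le_mul_left h1 w
      _ ≤ x := hx.1
  · calc x < (u / w + 1) * w := hx.2
      _ ≤ (u / w / m + 1) * m * w := mul_le_mul_left h2 w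
      _ = (u / 2^k + 1) * 2^k := by rw [hb, ← hwm]; ring

lemma numActive_succ (k L R u : ℕ) :
    numActive (k+1) L R u =
      numActive k L R u +
      (if (¬ seg (k+1) 0 u ⊆ Finset.Icc L R ∧
            seg (k+1) 0 u ∩ Finset.Icc L R ≠ seg (k+1) 1 u ∩ Finset.Icc L R) then 1 else 0) := by
  rw [numActive, numActive, Finset.card_filter, Finset.card_filter, Finset.sum_range_succ']
  congr 1
  apply Finset.sum_congr rfl
  intro i _
  simp only [seg_succ]

lemma numActive_succ_le (k L R u : ℕ) : numActive (k+1) L R u ≤ numActive k L R u + 1 := by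
  rw [numActive_succ]; split <;> omega

lemma numActive_eq_zero {k L R M u : ℕ} (hd : 2^k ∣ M) (h1 : M ≤ u) (h2 : u < M + 2^k)
    (hL : L ≤ M) (hR : M + 2^k ≤ R + 1) : numActive k L R u = 0 := by
  obtain ⟨t, rfl⟩ := hd
  have hb : u / 2^k = t := div_eq_block h1 h2
  rw [numActive, Finset.card_eq_zero, Finset.filter_eq_empty_iff]
  intro i _
  rintro ⟨hns, -⟩
  apply hns
  intro x hx
  have hxb := seg_subset_block k i u hx
  rw [hb, Finset.mem_Ico] at hxb
  rw [Finset.mem_Icc]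
  have e1 : t * 2^k = 2^k * t := mul_comm _ _
  have e2 : (t + 1) * 2^k = 2^k * t + 2^k := by ring
  omega

lemma numActive_congr {k L R L' R' M u : ℕ} (hd : 2^k ∣ M) (h1 : M ≤ u) (h2 : u < M + 2^k)
    (h : ∀ x, M ≤ x → x < M + 2^k → ((L ≤ x ∧ x ≤ R) ↔ (L' ≤ x ∧ x ≤ R'))) :
    numActive k L R u = numActive k L' R' u := by
  obtain ⟨t, rfl⟩ := hd
  have hb : u / 2^k = t := div_eq_block h1 h2
  have hblk : ∀ {x j : ℕ}, x ∈ seg k j u → 2^k * t ≤ x ∧ x < 2^k * t + 2^k := by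
    intro x j hx
    have hxb := seg_subset_block k j u hx
    rw [hb, Finset.mem_Ico] at hxb
    have e1 : t * 2^k = 2^k * t := mul_comm _ _
    have e2 : (t + 1) * 2^k = 2^k * t + 2^k := by ring
    omega
  have key : ∀ j, seg k j u ∩ Finset.Icc L R = seg k j u ∩ Finset.Icc L' R' := by
    intro j
    ext x
    simp only [Finset.mem_inter, Finset.mem_Icc]
    constructor
    · rintro ⟨hx, hx2⟩
      exact ⟨hx, (h x (hblk hx).1 (hblk hx).2).1 hx2⟩
    · rintro ⟨hx, hx2⟩
      exact ⟨hx, (h x (hblk hx).1 (hblk hx).2).2 hx2⟩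
  have key2 : ∀ j, (seg k j u ⊆ Finset.Icc L R) ↔ (seg k j u ⊆ Finset.Icc L' R') := by
    intro j
    rw [← Finset.inter_eq_left, ← Finset.inter_eq_left, key j]
  rw [numActive, numActive]
  congr 1
  apply Finset.filter_congr
  intro i _
  rw [key i, key (i+1), key2 i]

lemma numActive_succ_eq {k L R M u : ℕ} (hd : 2^k ∣ M) (h1 : M ≤ u) (h2 : u < M + 2^k)
    (hL : M ≤ L) (hR : R < M + 2^k) :
    numActive (k+1) L R u = numActive k L R u := by
  obtain ⟨t, ht⟩ := hd
  have hb : u / 2^k = t := div_eq_block (ht ▸ h1) (ht ▸ h2)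
  have hb2 : (u / 2^k + 1) * 2^k = M + 2^k := by rw [hb, ht]; ring
  have hb1 : u / 2^k * 2^k = M := by rw [hb, ht]; ring
  have hseg1 : seg (k+1) 1 u = Finset.Ico M (M + 2^k) := by
    rw [show seg (k+1) 1 u = seg k 0 u from seg_succ k 0 u, seg_zero, hb1, hb2]
  have hsub : Finset.Icc L R ⊆ seg (k+1) 1 u := by
    rw [hseg1]
    intro x hx
    rw [Finset.mem_Icc] at hx
    rw [Finset.mem_Ico]
    omega
  have hsub0 : seg (k+1) 1 u ⊆ seg (k+1) 0 u := by
    rw [seg_zero]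
    exact seg_subset_block (k+1) 1 u
  rw [numActive_succ, if_neg, add_zero]
  rintro ⟨-, hne⟩
  exact hne (by rw [Finset.inter_eq_right.mpr (hsub.trans hsub0), Finset.inter_eq_right.mpr hsub])

lemma Ico_eq_Icc {a b : ℕ} (hb : 0 < b) : Finset.Ico a b = Finset.Icc a (b-1) := by
  rw [← Finset.Ico_add_one_right_eq_Icc]
  congr 1
  omega

lemma master (k : ℕ) :
    (∀ L R : ℕ, 2^k ∣ L → L ≤ R → R < L + 2^k →
      ∑ u ∈ Finset.Icc L R, numActive k L R u ≤ 2 * (R - L + 1)) ∧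
    (∀ L R : ℕ, 2^k ∣ (R+1) → L ≤ R → R < L + 2^k →
      ∑ u ∈ Finset.Icc L R, numActive k L R u ≤ 2 * (R - L + 1)) ∧
    (∀ L R : ℕ, L ≤ R → R / 2^k = L / 2^k →
      ∑ u ∈ Finset.Icc L R, numActive k L R u ≤ 3 * (R - L + 1)) := by
  induction k with
  | zero =>
    have h0 : ∀ L R u : ℕ, numActive 0 L R u = 0 := fun L R u => by simp [numActive]
    exact ⟨fun L R _ _ _ => by simp [h0], fun L R _ _ _ => by simp [h0],
           fun L R _ _ => by simp [h0]⟩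
  | succ k ih =>
    obtain ⟨IG, IHH, IM⟩ := ih
    have hp : 0 < 2^k := pow_pos (by norm_num) k
    have hpk : (2:ℕ)^(k+1) = 2^k + 2^k := by rw [pow_succ]; omega
    refine ⟨?_, ?_, ?_⟩
    · -- prefix : L divisible by 2^(k+1)
      intro L R hdL hLR hR
      obtain ⟨t, ht⟩ := hdL
      have hdLk : (2:ℕ)^k ∣ L := ⟨2*t, by rw [ht, pow_succ]; ring⟩
      have hdMk : (2:ℕ)^k ∣ L + 2^k := ⟨2*t + 1, by rw [ht, pow_succ]; ring⟩
      by_cases hc : R < L + 2^k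
      · have heq : ∑ u ∈ Finset.Icc L R, numActive (k+1) L R u
            = ∑ u ∈ Finset.Icc L R, numActive k L R u := by
          refine Finset.sum_congr rfl fun u hu => ?_
          rw [Finset.mem_Icc] at hu
          exact numActive_succ_eq hdLk hu.1 (by omega) le_rfl hc
        rw [heq]
        exact IG L R hdLk hLR hc
      · push_neg at hc
        have hsplit : ∑ u ∈ Finset.Icc L R, numActive (k+1) L R u =
            ∑ u ∈ Finset.Ico L (L+2^k), numActive (k+1) L R u
            + ∑ u ∈ Finset.Ico (L+2^k) (R+1), numActive (k+1) L R u := by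
          rw [← Finset.Ico_add_one_right_eq_Icc,
            ← Finset.sum_Ico_consecutive _ (show L ≤ L+2^k by omega) (show L+2^k ≤ R+1 by omega)]
        have hleft : ∑ u ∈ Finset.Ico L (L+2^k), numActive (k+1) L R u ≤ 2^k := by
          have hbound : ∀ u ∈ Finset.Ico L (L+2^k), numActive (k+1) L R u ≤ 1 := by
            intro u hu
            rw [Finset.mem_Ico] at hu
            have h0 : numActive k L R u = 0 :=
              numActive_eq_zero hdLk hu.1 hu.2 le_rfl (by omega)
            have := numActive_succ_le k L R u
            omega
          calc ∑ u ∈ Finset.Ico L (L+2^k), numActive (k+1) L R u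
              ≤ ∑ _u ∈ Finset.Ico L (L+2^k), 1 := Finset.sum_le_sum hbound
            _ = (L + 2^k) - L := by simp [Nat.card_Ico]
            _ = 2^k := by omega
        have hright : ∑ u ∈ Finset.Ico (L+2^k) (R+1), numActive (k+1) L R u
            ≤ 3 * (R - (L+2^k) + 1) := by
          rw [Finset.Ico_add_one_right_eq_Icc]
          have hstep : ∀ u ∈ Finset.Icc (L+2^k) R,
              numActive (k+1) L R u ≤ numActive k (L+2^k) R u + 1 := by
            intro u hu
            rw [Finset.mem_Icc] at hu
            have hc2 : numActive k L R u = numActive k (L+2^k) R u :=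
              numActive_congr hdMk hu.1 (by omega) (by intro x hx1 hx2; omega)
            have := numActive_succ_le k L R u
            omega
          have hIG := IG (L+2^k) R hdMk hc (by omega)
          have hcard : (Finset.Icc (L+2^k) R).card = R + 1 - (L+2^k) := Nat.card_Icc _ _
          calc ∑ u ∈ Finset.Icc (L+2^k) R, numActive (k+1) L R u
              ≤ ∑ u ∈ Finset.Icc (L+2^k) R, (numActive k (L+2^k) R u + 1) :=
                Finset.sum_le_sum hstep
            _ = (∑ u ∈ Finset.Icc (L+2^k) R, numActive k (L+2^k) R u)
                + (Finset.Icc (L+2^k) R).card := by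
                rw [Finset.sum_add_distrib]; simp
            _ ≤ 3 * (R - (L+2^k) + 1) := by omega
        rw [hsplit]
        omega
    · -- suffix : R+1 divisible by 2^(k+1)
      intro L R hdR hLR hR
      obtain ⟨M, hMeq, hMge, hdM, hdB⟩ :
          ∃ M, R + 1 = M + 2^k ∧ 2^k ≤ M ∧ (2:ℕ)^k ∣ M ∧ (2:ℕ)^k ∣ (M - 2^k) := by
        obtain ⟨s, hs⟩ := hdR
        have hs1 : 1 ≤ s := by
          rcases Nat.eq_zero_or_pos s with rfl | h
          · simp at hs
          · exact h
        obtain ⟨s', rfl⟩ : ∃ s', s = s' + 1 := ⟨s - 1, by omega⟩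
        refine ⟨2^k * (2*s'+1), by rw [hs, pow_succ]; ring, by nlinarith,
          ⟨2*s'+1, rfl⟩, ⟨2*s', ?_⟩⟩
        have : 2^k * (2*s'+1) = 2^k * (2*s') + 2^k := by ring
        omega
      have hdR1 : (2:ℕ)^k ∣ R + 1 := by
        rw [hMeq]; exact dvd_add hdM dvd_rfl
      by_cases hc : M ≤ L
      · have heq : ∑ u ∈ Finset.Icc L R, numActive (k+1) L R u
            = ∑ u ∈ Finset.Icc L R, numActive k L R u := by
          refine Finset.sum_congr rfl fun u hu => ?_
          rw [Finset.mem_Icc] at hu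
          exact numActive_succ_eq hdM (by omega) (by omega) hc (by omega)
        rw [heq]
        exact IHH L R hdR1 hLR (by omega)
      · push_neg at hc
        have hsplit : ∑ u ∈ Finset.Icc L R, numActive (k+1) L R u =
            ∑ u ∈ Finset.Ico L M, numActive (k+1) L R u
            + ∑ u ∈ Finset.Ico M (R+1), numActive (k+1) L R u := by
          rw [← Finset.Ico_add_one_right_eq_Icc,
            ← Finset.sum_Ico_consecutive _ (show L ≤ M by omega) (show M ≤ R+1 by omega)]
        have hright : ∑ u ∈ Finset.Ico M (R+1), numActive (k+1) L R u ≤ 2^k := by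
          have hbound : ∀ u ∈ Finset.Ico M (R+1), numActive (k+1) L R u ≤ 1 := by
            intro u hu
            rw [Finset.mem_Ico] at hu
            have h0 : numActive k L R u = 0 :=
              numActive_eq_zero hdM hu.1 (by omega) (by omega) (by omega)
            have := numActive_succ_le k L R u
            omega
          calc ∑ u ∈ Finset.Ico M (R+1), numActive (k+1) L R u
              ≤ ∑ _u ∈ Finset.Ico M (R+1), 1 := Finset.sum_le_sum hbound
            _ = (R+1) - M := by simp [Nat.card_Ico]
            _ = 2^k := by omega
        have hMpos : 0 < M := by omega
        have hleft : ∑ u ∈ Finset.Ico L M, numActive (k+1) L R u ≤ 3 * (M - L) := by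
          rw [Ico_eq_Icc hMpos]
          have hstep : ∀ u ∈ Finset.Icc L (M-1),
              numActive (k+1) L R u ≤ numActive k L (M-1) u + 1 := by
            intro u hu
            rw [Finset.mem_Icc] at hu
            have hc2 : numActive k L R u = numActive k L (M-1) u := by
              refine numActive_congr hdB (by omega) (by omega) ?_
              intro x hx1 hx2
              omega
            have := numActive_succ_le k L R u
            omega
          have hIHH := IHH L (M-1) (by rw [show M - 1 + 1 = M from by omega]; exact hdM)
            (by omega) (by omega)
          have hcard : (Finset.Icc L (M-1)).card = (M-1) + 1 - L := Nat.card_Icc _ _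
          calc ∑ u ∈ Finset.Icc L (M-1), numActive (k+1) L R u
              ≤ ∑ u ∈ Finset.Icc L (M-1), (numActive k L (M-1) u + 1) :=
                Finset.sum_le_sum hstep
            _ = (∑ u ∈ Finset.Icc L (M-1), numActive k L (M-1) u)
                + (Finset.Icc L (M-1)).card := by
                rw [Finset.sum_add_distrib]; simp
            _ ≤ 3 * (M - L) := by omega
        rw [hsplit]
        omega
    · -- general same-block
      intro L R hLR hdiv
      have hpp : 0 < 2^(k+1) := pow_pos (by norm_num) _
      obtain ⟨B0, hB0L, hB0R, hdB0, hdM⟩ :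
          ∃ B0, B0 ≤ L ∧ R < B0 + (2^k + 2^k) ∧ (2:ℕ)^k ∣ B0 ∧ (2:ℕ)^k ∣ (B0 + 2^k) := by
        refine ⟨L / 2^(k+1) * 2^(k+1), Nat.div_mul_le_self _ _, ?_, ?_, ?_⟩
        · have h := lt_div_add_one_mul R (2^(k+1)) hpp
          rw [hdiv] at h
          have he : (L / 2^(k+1) + 1) * 2^(k+1) = L / 2^(k+1) * 2^(k+1) + 2^(k+1) := by ring
          omega
        · exact ⟨2 * (L / 2^(k+1)), by rw [pow_succ]; ring⟩
        · exact ⟨2 * (L / 2^(k+1)) + 1, by rw [pow_succ]; ring⟩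
      obtain ⟨t0, ht0⟩ := id hdB0
      by_cases hc1 : R < B0 + 2^k
      · -- range in left half
        have heq : ∑ u ∈ Finset.Icc L R, numActive (k+1) L R u
            = ∑ u ∈ Finset.Icc L R, numActive k L R u := by
          refine Finset.sum_congr rfl fun u hu => ?_
          rw [Finset.mem_Icc] at hu
          exact numActive_succ_eq hdB0 (by omega) (by omega) (by omega) (by omega)
        rw [heq]
        refine IM L R hLR ?_
        have h1 : L / 2^k = t0 := div_eq_block (by rw [← ht0]; omega) (by rw [← ht0]; omega)
        have h2 : R / 2^k = t0 := div_eq_block (by rw [← ht0]; omega) (by rw [← ht0]; omega)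
        rw [h1, h2]
      · by_cases hc2 : B0 + 2^k ≤ L
        · -- range in right half
          have he : (2:ℕ)^k * (t0 + 1) = B0 + 2^k := by rw [ht0]; ring
          have heq : ∑ u ∈ Finset.Icc L R, numActive (k+1) L R u
              = ∑ u ∈ Finset.Icc L R, numActive k L R u := by
            refine Finset.sum_congr rfl fun u hu => ?_
            rw [Finset.mem_Icc] at hu
            exact numActive_succ_eq hdM (by omega) (by omega) (by omega) (by omega)
          rw [heq]
          refine IM L R hLR ?_
          have h1 : L / 2^k = t0 + 1 := div_eq_block (by rw [he]; omega) (by rw [he]; omega)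
          have h2 : R / 2^k = t0 + 1 := div_eq_block (by rw [he]; omega) (by rw [he]; omega)
          rw [h1, h2]
        · -- straddle
          push_neg at hc1 hc2
          have hsplit : ∑ u ∈ Finset.Icc L R, numActive (k+1) L R u =
              ∑ u ∈ Finset.Ico L (B0 + 2^k), numActive (k+1) L R u
              + ∑ u ∈ Finset.Ico (B0 + 2^k) (R+1), numActive (k+1) L R u := by
            rw [← Finset.Ico_add_one_right_eq_Icc,
              ← Finset.sum_Ico_consecutive _ (show L ≤ B0 + 2^k by omega)
                (show B0 + 2^k ≤ R+1 by omega)]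
          have hMpos : 0 < B0 + 2^k := by omega
          have hleft : ∑ u ∈ Finset.Ico L (B0 + 2^k), numActive (k+1) L R u
              ≤ 3 * ((B0 + 2^k) - L) := by
            rw [Ico_eq_Icc hMpos]
            have hstep : ∀ u ∈ Finset.Icc L (B0 + 2^k - 1),
                numActive (k+1) L R u ≤ numActive k L (B0 + 2^k - 1) u + 1 := by
              intro u hu
              rw [Finset.mem_Icc] at hu
              have hc2' : numActive k L R u = numActive k L (B0 + 2^k - 1) u := by
                refine numActive_congr hdB0 (by omega) (by omega) ?_
                intro x hx1 hx2
                omega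
              have := numActive_succ_le k L R u
              omega
            have hIHH := IHH L (B0 + 2^k - 1)
              (by rw [show B0 + 2^k - 1 + 1 = B0 + 2^k from by omega]; exact hdM)
              (by omega) (by omega)
            have hcard : (Finset.Icc L (B0 + 2^k - 1)).card = (B0 + 2^k - 1) + 1 - L :=
              Nat.card_Icc _ _
            calc ∑ u ∈ Finset.Icc L (B0 + 2^k - 1), numActive (k+1) L R u
                ≤ ∑ u ∈ Finset.Icc L (B0 + 2^k - 1), (numActive k L (B0 + 2^k - 1) u + 1) :=
                  Finset.sum_le_sum hstep
              _ = (∑ u ∈ Finset.Icc L (B0 + 2^k - 1), numActive k L (B0 + 2^k - 1) u)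
                  + (Finset.Icc L (B0 + 2^k - 1)).card := by
                  rw [Finset.sum_add_distrib]; simp
              _ ≤ 3 * ((B0 + 2^k) - L) := by omega
          have hright : ∑ u ∈ Finset.Ico (B0 + 2^k) (R+1), numActive (k+1) L R u
              ≤ 3 * (R - (B0 + 2^k) + 1) := by
            rw [Finset.Ico_add_one_right_eq_Icc]
            have hstep : ∀ u ∈ Finset.Icc (B0 + 2^k) R,
                numActive (k+1) L R u ≤ numActive k (B0 + 2^k) R u + 1 := by
              intro u hu
              rw [Finset.mem_Icc] at hu
              have hc2' : numActive k L R u = numActive k (B0 + 2^k) R u := by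
                refine numActive_congr hdM (by omega) (by omega) ?_
                intro x hx1 hx2
                omega
              have := numActive_succ_le k L R u
              omega
            have hIG := IG (B0 + 2^k) R hdM hc1 (by omega)
            have hcard : (Finset.Icc (B0 + 2^k) R).card = R + 1 - (B0 + 2^k) := Nat.card_Icc _ _
            calc ∑ u ∈ Finset.Icc (B0 + 2^k) R, numActive (k+1) L R u
                ≤ ∑ u ∈ Finset.Icc (B0 + 2^k) R, (numActive k (B0 + 2^k) R u + 1) :=
                  Finset.sum_le_sum hstep
              _ = (∑ u ∈ Finset.Icc (B0 + 2^k) R, numActive k (B0 + 2^k) R u)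
                  + (Finset.Icc (B0 + 2^k) R).card := by
                  rw [Finset.sum_add_distrib]; simp
              _ ≤ 3 * (R - (B0 + 2^k) + 1) := by omega
          rw [hsplit]
          omega

/-- Summed over all in-range points, the total number of active levels is at
most `3·(R - L + 1)`: on average each in-range object has `O(1)` active levels. -/
theorem sum_numActive_le (k L R : ℕ) (hLR : L ≤ R) (hR : R < 2 ^ k) :
    ∑ u ∈ Finset.Icc L R, numActive k L R u ≤ 3 * (R - L + 1) := by
  exact (master k).2.2 L R hLR
    (by rw [Nat.div_eq_of_lt hR, Nat.div_eq_of_lt (lt_of_le_of_lt hLR hR)])
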